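/- Let (x_n) be a sequence in a Hilbert space H converging weakly to x, and let D_n, D be measurable subsets of Ω with χ_{D_n} → χ_D in L¹(Ω). Assume the bilinear forms a_S(u,v) = ∫_S b(u,v) are given by a fixed continuous nonnegative symmetric bilinear density b (so a_S(u,u)^{1/2} defines a seminorm controlled by ‖·‖_H). Then a_D(x,x) ≤ liminf_n a_{D_n}(x_n, x_n). -/

import Mathlib

open Filter MeasureTheory
open scoped RealInnerProductSpace

private lemma aux_inner_toLp_indicator {Ω : Type*} [MeasurableSpace Ω] {μ : Measure Ω}
    {E : Type*} [NormedAddCommGroup E] [InnerProductSpace ℝ E]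
    (f g : Lp E 2 μ) {s : Set Ω} (hs : MeasurableSet s) :
    ⟪f, ((Lp.memLp g).indicator hs).toLp _⟫ = ∫ ω in s, ⟪f ω, g ω⟫ ∂μ := by
  rw [L2.inner_def, ← integral_indicator hs]
  refine integral_congr_ae ?_
  filter_upwards [MemLp.coeFn_toLp (E := E) ((Lp.memLp g).indicator hs)] with ω hω
  rw [hω]
  by_cases hωs : ω ∈ s <;> simp [Set.indicator_apply, hωs]

private lemma aux_tendsto_setIntegral_symmDiff {Ω : Type*} [MeasurableSpace Ω] {μ : Measure Ω}
    {h : Ω → ℝ} (hh : Integrable h μ) {s : ℕ → Set Ω} {t : Set Ω}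
    (hs : ∀ n, MeasurableSet (s n)) (ht : MeasurableSet t)
    (hst : Tendsto (fun n => μ (symmDiff (s n) t)) atTop (nhds 0)) :
    Tendsto (fun n => ∫ ω in s n, h ω ∂μ) atTop (nhds (∫ ω in t, h ω ∂μ)) := by
  have h1 : Tendsto (fun n => ∫ ω in s n \ t, h ω ∂μ) atTop (nhds 0) := by
    refine hh.tendsto_setIntegral_nhds_zero ?_
    refine tendsto_of_tendsto_of_tendsto_of_le_of_le tendsto_const_nhds hst
      (fun n => zero_le) (fun n => measure_mono ?_)
    rw [Set.symmDiff_def]; exact Set.subset_union_left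
  have h2 : Tendsto (fun n => ∫ ω in t \ s n, h ω ∂μ) atTop (nhds 0) := by
    refine hh.tendsto_setIntegral_nhds_zero ?_
    refine tendsto_of_tendsto_of_tendsto_of_le_of_le tendsto_const_nhds hst
      (fun n => zero_le) (fun n => measure_mono ?_)
    rw [Set.symmDiff_def]; exact Set.subset_union_right
  have key : ∀ n, ∫ ω in s n, h ω ∂μ
      = ∫ ω in t, h ω ∂μ + ∫ ω in s n \ t, h ω ∂μ - ∫ ω in t \ s n, h ω ∂μ := by
    intro n
    have e1 : ∫ ω in s n ∩ t, h ω ∂μ + ∫ ω in s n \ t, h ω ∂μ = ∫ ω in s n, h ω ∂μ :=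
      integral_inter_add_diff ht hh.integrableOn
    have e2 : ∫ ω in t ∩ s n, h ω ∂μ + ∫ ω in t \ s n, h ω ∂μ = ∫ ω in t, h ω ∂μ :=
      integral_inter_add_diff (hs n) hh.integrableOn
    rw [Set.inter_comm] at e1
    linarith
  have := ((tendsto_const_nhds (x := ∫ ω in t, h ω ∂μ)).add h1).sub h2
  simp only [add_zero, sub_zero] at this
  exact Tendsto.congr (fun n => (key n).symm) this

theorem localized_energy_lower_semicontinuous
    {H : Type*} [NormedAddCommGroup H] [InnerProductSpace ℝ H] [CompleteSpace H]
    {Ω : Type*} [MeasurableSpace Ω] (μ : Measure Ω) (k : ℕ)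
    (T : H →L[ℝ] Lp (EuclideanSpace ℝ (Fin k)) 2 μ)
    (x : ℕ → H) (xlim : H)
    (hweak : ∀ f : H →L[ℝ] ℝ, Tendsto (fun n => f (x n)) atTop (nhds (f xlim)))
    (D : ℕ → Set Ω) (Dlim : Set Ω)
    (hD : ∀ n, MeasurableSet (D n)) (hDlim : MeasurableSet Dlim)
    (hsets : Tendsto (fun n => μ (symmDiff (D n) Dlim)) atTop (nhds 0)) :
    (∫ ω in Dlim, ‖(T xlim : Lp (EuclideanSpace ℝ (Fin k)) 2 μ) ω‖ ^ 2 ∂μ) ≤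
      atTop.liminf
        (fun n => ∫ ω in D n, ‖(T (x n) : Lp (EuclideanSpace ℝ (Fin k)) 2 μ) ω‖ ^ 2 ∂μ) := by
  classical
  -- boundedness of the weakly convergent sequence
  obtain ⟨C, hC⟩ : ∃ C, ∀ n, ‖x n‖ ≤ C := by
    have hpt : ∀ y : H, ∃ C, ∀ n, ‖(innerSL ℝ (x n)) y‖ ≤ C := by
      intro y
      obtain ⟨C, hC⟩ := ((hweak (innerSL ℝ y)).norm).bddAbove_range
      refine ⟨C, fun n => ?_⟩
      have := hC (Set.mem_range_self n)
      simpa [innerSL_apply_apply, real_inner_comm] using this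
    obtain ⟨C, hC⟩ := banach_steinhaus (g := fun n => innerSL ℝ (x n)) hpt
    exact ⟨C, fun n => by simpa [innerSL_apply_norm] using hC n⟩
  -- integrability facts
  have hInt_ul : Integrable (fun ω => ‖(T xlim : Lp (EuclideanSpace ℝ (Fin k)) 2 μ) ω‖ ^ 2) μ :=
    (memLp_two_iff_integrable_sq_norm (Lp.aestronglyMeasurable _)).mp (Lp.memLp _)
  have hInt_un : ∀ n, Integrable
      (fun ω => ‖(T (x n) : Lp (EuclideanSpace ℝ (Fin k)) 2 μ) ω‖ ^ 2) μ := fun n =>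
    (memLp_two_iff_integrable_sq_norm (Lp.aestronglyMeasurable _)).mp (Lp.memLp _)
  have hInt_inner : ∀ n, Integrable
      (fun ω => ⟪(T (x n) : Lp (EuclideanSpace ℝ (Fin k)) 2 μ) ω,
        (T xlim : Lp (EuclideanSpace ℝ (Fin k)) 2 μ) ω⟫) μ := fun n =>
    L2.integrable_inner (𝕜 := ℝ) _ _
  -- the indicator elements
  set v : ℕ → Lp (EuclideanSpace ℝ (Fin k)) 2 μ :=
    fun n => ((Lp.memLp (T xlim)).indicator (hD n)).toLp _ with hv
  set vl : Lp (EuclideanSpace ℝ (Fin k)) 2 μ :=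
    ((Lp.memLp (T xlim)).indicator hDlim).toLp _ with hvl
  have hcoe : ∀ n : ℕ, ⇑(v n) =ᵐ[μ] (D n).indicator ⇑(T xlim) := fun n => MemLp.coeFn_toLp _
  have hcoel : ⇑vl =ᵐ[μ] Dlim.indicator ⇑(T xlim) := MemLp.coeFn_toLp _
  -- strong convergence v n → vl
  have hw : Tendsto (fun n => ‖v n - vl‖) atTop (nhds 0) := by
    have hkey : ∀ n, ‖v n - vl‖ ^ 2 ≤
        ∫ ω in symmDiff (D n) Dlim, ‖(T xlim : Lp (EuclideanSpace ℝ (Fin k)) 2 μ) ω‖ ^ 2 ∂μ := by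
      intro n
      have h1 : ‖v n - vl‖ ^ 2 = ∫ ω, ⟪(v n - vl) ω, (v n - vl) ω⟫ ∂μ := by
        rw [← L2.inner_def, real_inner_self_eq_norm_sq]
      have hsd : MeasurableSet (symmDiff (D n) Dlim) := (hD n).symmDiff hDlim
      rw [h1, ← integral_indicator hsd]
      refine integral_mono_ae (L2.integrable_inner (𝕜 := ℝ) _ _) (hInt_ul.indicator hsd) ?_
      filter_upwards [Lp.coeFn_sub (v n) vl, hcoe n, hcoel] with ω h1 h2 h3
      rw [real_inner_self_eq_norm_sq, h1, Pi.sub_apply, h2, h3]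
      by_cases hA : ω ∈ D n <;> by_cases hB : ω ∈ Dlim <;>
        simp [Set.indicator_apply, hA, hB, Set.mem_symmDiff]
    have hmeas0 : Tendsto (fun n => ∫ ω in symmDiff (D n) Dlim,
        ‖(T xlim : Lp (EuclideanSpace ℝ (Fin k)) 2 μ) ω‖ ^ 2 ∂μ) atTop (nhds 0) :=
      hInt_ul.tendsto_setIntegral_nhds_zero hsets
    have hsq : Tendsto (fun n => ‖v n - vl‖ ^ 2) atTop (nhds 0) :=
      tendsto_of_tendsto_of_tendsto_of_le_of_le tendsto_const_nhds hmeas0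
        (fun n => sq_nonneg _) hkey
    have := (Real.continuous_sqrt.tendsto' 0 0 Real.sqrt_zero).comp hsq
    exact this.congr fun n => Real.sqrt_sq (norm_nonneg _)
  -- inner product formulas
  have hinner : ∀ n, ⟪T (x n), v n⟫ = ∫ ω in D n,
      ⟪(T (x n) : Lp (EuclideanSpace ℝ (Fin k)) 2 μ) ω,
        (T xlim : Lp (EuclideanSpace ℝ (Fin k)) 2 μ) ω⟫ ∂μ := fun n =>
    aux_inner_toLp_indicator (T (x n)) (T xlim) (hD n)
  have hLval : ⟪T xlim, vl⟫ = ∫ ω in Dlim,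
      ‖(T xlim : Lp (EuclideanSpace ℝ (Fin k)) 2 μ) ω‖ ^ 2 ∂μ := by
    rw [aux_inner_toLp_indicator (T xlim) (T xlim) hDlim]
    exact integral_congr_ae (Eventually.of_forall fun ω => real_inner_self_eq_norm_sq _)
  -- convergence of the cross term
  have hc : Tendsto (fun n => ∫ ω in D n,
      ⟪(T (x n) : Lp (EuclideanSpace ℝ (Fin k)) 2 μ) ω,
        (T xlim : Lp (EuclideanSpace ℝ (Fin k)) 2 μ) ω⟫ ∂μ) atTop
      (nhds (∫ ω in Dlim, ‖(T xlim : Lp (EuclideanSpace ℝ (Fin k)) 2 μ) ω‖ ^ 2 ∂μ)) := by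
    have h1 : Tendsto (fun n => ⟪T (x n), vl⟫) atTop (nhds ⟪T xlim, vl⟫) := by
      have h := hweak ((innerSL ℝ vl).comp T)
      simp only [ContinuousLinearMap.comp_apply, innerSL_apply_apply] at h
      have h' := h.congr fun n => real_inner_comm (T (x n)) vl
      rwa [real_inner_comm (T xlim) vl] at h'
    have h2 : Tendsto (fun n => ⟪T (x n), v n - vl⟫) atTop (nhds 0) := by
      refine squeeze_zero_norm (a := fun n => ‖T‖ * C * ‖v n - vl‖) (fun n => ?_) ?_
      · refine (norm_inner_le_norm _ _).trans ?_
        refine mul_le_mul_of_nonneg_right ?_ (norm_nonneg _)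
        exact (T.le_opNorm _).trans (mul_le_mul_of_nonneg_left (hC n) (norm_nonneg _))
      · simpa using tendsto_const_nhds.mul hw
    have := h1.add h2
    rw [add_zero, hLval] at this
    refine this.congr fun n => ?_
    rw [← hinner n, ← inner_add_right]
    congr 1
    abel
  -- convergence of b
  have hb : Tendsto (fun n => ∫ ω in D n,
      ‖(T xlim : Lp (EuclideanSpace ℝ (Fin k)) 2 μ) ω‖ ^ 2 ∂μ) atTop
      (nhds (∫ ω in Dlim, ‖(T xlim : Lp (EuclideanSpace ℝ (Fin k)) 2 μ) ω‖ ^ 2 ∂μ)) :=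
    aux_tendsto_setIntegral_symmDiff hInt_ul hD hDlim hsets
  -- pointwise lower bound
  have hlow : ∀ n, 2 * (∫ ω in D n,
        ⟪(T (x n) : Lp (EuclideanSpace ℝ (Fin k)) 2 μ) ω,
          (T xlim : Lp (EuclideanSpace ℝ (Fin k)) 2 μ) ω⟫ ∂μ)
      - (∫ ω in D n, ‖(T xlim : Lp (EuclideanSpace ℝ (Fin k)) 2 μ) ω‖ ^ 2 ∂μ)
      ≤ ∫ ω in D n, ‖(T (x n) : Lp (EuclideanSpace ℝ (Fin k)) 2 μ) ω‖ ^ 2 ∂μ := by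
    intro n
    have hnonneg : (0:ℝ) ≤ ∫ ω in D n,
        ‖(T (x n) : Lp (EuclideanSpace ℝ (Fin k)) 2 μ) ω
          - (T xlim : Lp (EuclideanSpace ℝ (Fin k)) 2 μ) ω‖ ^ 2 ∂μ :=
      integral_nonneg fun ω => sq_nonneg _
    have hexp : ∫ ω in D n,
        ‖(T (x n) : Lp (EuclideanSpace ℝ (Fin k)) 2 μ) ω
          - (T xlim : Lp (EuclideanSpace ℝ (Fin k)) 2 μ) ω‖ ^ 2 ∂μ
        = (∫ ω in D n, ‖(T (x n) : Lp (EuclideanSpace ℝ (Fin k)) 2 μ) ω‖ ^ 2 ∂μ)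
          - 2 * (∫ ω in D n,
            ⟪(T (x n) : Lp (EuclideanSpace ℝ (Fin k)) 2 μ) ω,
              (T xlim : Lp (EuclideanSpace ℝ (Fin k)) 2 μ) ω⟫ ∂μ)
          + (∫ ω in D n, ‖(T xlim : Lp (EuclideanSpace ℝ (Fin k)) 2 μ) ω‖ ^ 2 ∂μ) := by
      have hptw : ∀ ω, ‖(T (x n) : Lp (EuclideanSpace ℝ (Fin k)) 2 μ) ω
            - (T xlim : Lp (EuclideanSpace ℝ (Fin k)) 2 μ) ω‖ ^ 2
          = ‖(T (x n) : Lp (EuclideanSpace ℝ (Fin k)) 2 μ) ω‖ ^ 2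
            - 2 * ⟪(T (x n) : Lp (EuclideanSpace ℝ (Fin k)) 2 μ) ω,
              (T xlim : Lp (EuclideanSpace ℝ (Fin k)) 2 μ) ω⟫
            + ‖(T xlim : Lp (EuclideanSpace ℝ (Fin k)) 2 μ) ω‖ ^ 2 :=
        fun ω => norm_sub_sq_real _ _
      have i1 : IntegrableOn (fun ω => ‖(T (x n) : Lp (EuclideanSpace ℝ (Fin k)) 2 μ) ω‖ ^ 2
          - 2 * ⟪(T (x n) : Lp (EuclideanSpace ℝ (Fin k)) 2 μ) ω,
            (T xlim : Lp (EuclideanSpace ℝ (Fin k)) 2 μ) ω⟫) (D n) μ :=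
        ((hInt_un n).integrableOn).sub (((hInt_inner n).const_mul 2).integrableOn)
      simp_rw [hptw]
      rw [integral_add i1 hInt_ul.integrableOn,
        integral_sub ((hInt_un n).integrableOn) (((hInt_inner n).const_mul 2).integrableOn),
        integral_const_mul]
    linarith [hexp ▸ hnonneg]
  -- upper bound on a
  have haub : ∀ n, (∫ ω in D n, ‖(T (x n) : Lp (EuclideanSpace ℝ (Fin k)) 2 μ) ω‖ ^ 2 ∂μ)
      ≤ (‖T‖ * C) ^ 2 := by
    intro n
    have h1 : (∫ ω in D n, ‖(T (x n) : Lp (EuclideanSpace ℝ (Fin k)) 2 μ) ω‖ ^ 2 ∂μ)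
        ≤ ∫ ω, ‖(T (x n) : Lp (EuclideanSpace ℝ (Fin k)) 2 μ) ω‖ ^ 2 ∂μ :=
      setIntegral_le_integral (hInt_un n) (Eventually.of_forall fun ω => sq_nonneg _)
    have h2 : (∫ ω, ‖(T (x n) : Lp (EuclideanSpace ℝ (Fin k)) 2 μ) ω‖ ^ 2 ∂μ)
        = ‖T (x n)‖ ^ 2 := by
      rw [← (real_inner_self_eq_norm_sq (T (x n))), L2.inner_def]
      exact integral_congr_ae (Eventually.of_forall fun ω => (real_inner_self_eq_norm_sq _).symm)
    have h3 : ‖T (x n)‖ ≤ ‖T‖ * C :=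
      (T.le_opNorm _).trans (mul_le_mul_of_nonneg_left (hC n) (norm_nonneg _))
    calc _ ≤ ‖T (x n)‖ ^ 2 := h2 ▸ h1
      _ ≤ (‖T‖ * C) ^ 2 := by
          have h0 : (0:ℝ) ≤ ‖T (x n)‖ := norm_nonneg _
          nlinarith
  -- conclusion
  have hbd : Tendsto (fun n => 2 * (∫ ω in D n,
        ⟪(T (x n) : Lp (EuclideanSpace ℝ (Fin k)) 2 μ) ω,
          (T xlim : Lp (EuclideanSpace ℝ (Fin k)) 2 μ) ω⟫ ∂μ)
      - (∫ ω in D n, ‖(T xlim : Lp (EuclideanSpace ℝ (Fin k)) 2 μ) ω‖ ^ 2 ∂μ)) atTop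
      (nhds (∫ ω in Dlim, ‖(T xlim : Lp (EuclideanSpace ℝ (Fin k)) 2 μ) ω‖ ^ 2 ∂μ)) := by
    have := (hc.const_mul 2).sub hb
    rw [two_mul, add_sub_cancel_right] at this
    exact this
  refine le_trans ?_ (liminf_le_liminf (Eventually.of_forall hlow) ?_ ?_)
  · exact (hbd.liminf_eq).ge
  · exact hbd.isBoundedUnder_ge
  · exact isCoboundedUnder_ge_of_le atTop haub
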